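/- Assume η² > ζ² + ι²/β². For N > 0 define f_N : [0,1] → ℝ by f_N(x) = [N^{−p} + ((1/ζ²)(1−x²) + (β²/(β²η² − ι²)) x²)^{p/2}]^{−1/p} · (β²/(β²η² − ι²)) x. Then f_N is strictly increasing on [0,1]. -/

import Mathlib

/-- The function
`f_N(x) = [N^{−p} + ((1/ζ²)(1−x²) + (β²/(β²η² − ι²)) x²)^{p/2}]^{−1/p} · (β²/(β²η² − ι²)) x`. -/
noncomputable def fN (p β ζ η ι N x : ℝ) : ℝ :=
  (N ^ (-p) + ((1 / ζ ^ 2) * (1 - x ^ 2)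
      + (β ^ 2 / (β ^ 2 * η ^ 2 - ι ^ 2)) * x ^ 2) ^ (p / 2)) ^ (-(1 / p))
    * (β ^ 2 / (β ^ 2 * η ^ 2 - ι ^ 2)) * x

set_option maxHeartbeats 2000000 in
/-- if `η² > ζ² + ι²/β²` then, for every `N > 0`, the function `f_N` is
strictly increasing on `[0,1]`. -/
theorem fN_strictMonoOn (p β ζ η ι : ℝ) (hp : 0 < p) (hβ : 0 < β) (hζ : 0 < ζ)
    (hη : 0 < η) (hβηι : 0 < β ^ 2 * η ^ 2 - ι ^ 2)
    (hmat : ζ ^ 2 + ι ^ 2 / β ^ 2 < η ^ 2) (N : ℝ) (hN : 0 < N) :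
    StrictMonoOn (fN p β ζ η ι N) (Set.Icc 0 1) := by
  intro x hx y hy hxy
  obtain ⟨hx0, hx1⟩ := hx
  obtain ⟨hy0, hy1⟩ := hy
  set B : ℝ := β ^ 2 / (β ^ 2 * η ^ 2 - ι ^ 2) with hBdef
  clear_value B
  have hB : 0 < B := by rw [hBdef]; exact div_pos (by positivity) hβηι
  have hBA : B < 1 / ζ ^ 2 := by
    rw [hBdef, div_lt_div_iff₀ hβηι (by positivity)]
    have h2 : ζ ^ 2 * β ^ 2 + ι ^ 2 < η ^ 2 * β ^ 2 := by
      have h := mul_lt_mul_of_pos_right hmat (by positivity : (0:ℝ) < β ^ 2)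
      rw [add_mul, div_mul_cancel₀ _ (by positivity : (β:ℝ) ^ 2 ≠ 0)] at h
      linarith
    nlinarith
  have hqx : 0 < 1 / ζ ^ 2 * (1 - x ^ 2) + B * x ^ 2 := by
    rcases lt_or_eq_of_le hx1 with h | h
    · have : 0 < 1 - x ^ 2 := by nlinarith
      nlinarith [mul_nonneg hB.le (sq_nonneg x), mul_pos (by positivity : (0:ℝ) < 1/ζ^2) this]
    · subst h; nlinarith
  have hqy : 0 < 1 / ζ ^ 2 * (1 - y ^ 2) + B * y ^ 2 := by
    rcases lt_or_eq_of_le hy1 with h | h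
    · have : 0 < 1 - y ^ 2 := by nlinarith
      nlinarith [mul_nonneg hB.le (sq_nonneg y), mul_pos (by positivity : (0:ℝ) < 1/ζ^2) this]
    · subst h; nlinarith
  have hqle : 1 / ζ ^ 2 * (1 - y ^ 2) + B * y ^ 2 ≤ 1 / ζ ^ 2 * (1 - x ^ 2) + B * x ^ 2 := by
    have hx2y2 : x ^ 2 ≤ y ^ 2 := by nlinarith
    have key := mul_le_mul_of_nonneg_left hx2y2 (sub_pos.mpr hBA).le
    rw [sub_mul, sub_mul] at key
    linarith
  have hrle : (1 / ζ ^ 2 * (1 - y ^ 2) + B * y ^ 2) ^ (p / 2)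
      ≤ (1 / ζ ^ 2 * (1 - x ^ 2) + B * x ^ 2) ^ (p / 2) :=
    Real.rpow_le_rpow hqy.le hqle (by positivity)
  have hbx : 0 < N ^ (-p) + (1 / ζ ^ 2 * (1 - x ^ 2) + B * x ^ 2) ^ (p / 2) := by
    have := Real.rpow_pos_of_pos hN (-p); positivity
  have hby : 0 < N ^ (-p) + (1 / ζ ^ 2 * (1 - y ^ 2) + B * y ^ 2) ^ (p / 2) := by
    have := Real.rpow_pos_of_pos hN (-p); positivity
  have hble : N ^ (-p) + (1 / ζ ^ 2 * (1 - y ^ 2) + B * y ^ 2) ^ (p / 2)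
      ≤ N ^ (-p) + (1 / ζ ^ 2 * (1 - x ^ 2) + B * x ^ 2) ^ (p / 2) := add_le_add_right hrle _
  have hhle : (N ^ (-p) + (1 / ζ ^ 2 * (1 - x ^ 2) + B * x ^ 2) ^ (p / 2)) ^ (-(1 / p))
      ≤ (N ^ (-p) + (1 / ζ ^ 2 * (1 - y ^ 2) + B * y ^ 2) ^ (p / 2)) ^ (-(1 / p)) :=
    Real.rpow_le_rpow_of_nonpos hby hble (by
      have : 0 < 1 / p := by positivity
      linarith)
  have hhx : 0 < (N ^ (-p) + (1 / ζ ^ 2 * (1 - x ^ 2) + B * x ^ 2) ^ (p / 2)) ^ (-(1 / p)) :=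
    Real.rpow_pos_of_pos hbx _
  have hhy : 0 < (N ^ (-p) + (1 / ζ ^ 2 * (1 - y ^ 2) + B * y ^ 2) ^ (p / 2)) ^ (-(1 / p)) :=
    Real.rpow_pos_of_pos hby _
  simp only [fN]
  rw [← hBdef]
  calc (N ^ (-p) + (1 / ζ ^ 2 * (1 - x ^ 2) + B * x ^ 2) ^ (p / 2)) ^ (-(1 / p)) * B * x
      ≤ (N ^ (-p) + (1 / ζ ^ 2 * (1 - y ^ 2) + B * y ^ 2) ^ (p / 2)) ^ (-(1 / p)) * B * x :=
        mul_le_mul_of_nonneg_right (mul_le_mul_of_nonneg_right hhle hB.le) hx0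
    _ < (N ^ (-p) + (1 / ζ ^ 2 * (1 - y ^ 2) + B * y ^ 2) ^ (p / 2)) ^ (-(1 / p)) * B * y :=
        mul_lt_mul_of_pos_left hxy (mul_pos hhy hB)
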